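/- Let i ≥ 1 and let J ⊆ 𝔖 be an ideal containing u^s and p^N for some s, N ∈ ℕ, and satisfying E^{i−1}·J ⊆ Ideal.map φ J (the ideal of 𝔖 generated by φ(J)). If α ∈ ℕ is such that J + p𝔖 = (u^α) + p𝔖, then (p−1)·α ≤ e·(i−1). (This is the annihilator-ideal form of the paper's exponent inequality: the prismatic Proposition 3.1 shows that J = Ann_𝔖 of the u^∞-torsion of i-th mod p^n prismatic cohomology satisfies the hypotheses.) -/

import Mathlib

/-- **Corollary 3.2 (cor exponent inequality), annihilator-ideal form.** Let `𝔖 = W(k)⟦u⟧` with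
Frobenius lift `φ` and let `E` be an Eisenstein polynomial of degree `e ≥ 1`.  Let `i ≥ 1` and let
`J ⊆ 𝔖` be an ideal containing `u^s` and `p^N` and satisfying `E^{i-1}·J ⊆ φ(J)𝔖`.  If
`J + (p) = (u^α) + (p)`, then `(p-1)·α ≤ e·(i-1)`. -/
theorem stmt4 (p : ℕ) [Fact p.Prime] (k : Type*) [Field k] [CharP k p] [PerfectField k]
    (φ : PowerSeries (WittVector p k) →+* PowerSeries (WittVector p k))
    (hφu : φ PowerSeries.X = PowerSeries.X ^ p)
    (hφC : ∀ a : WittVector p k,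
      φ (PowerSeries.C a) = PowerSeries.C (WittVector.frobenius a))
    (e : ℕ) (he : 1 ≤ e) (a : ℕ → WittVector p k)
    (E : PowerSeries (WittVector p k))
    (hE : E = PowerSeries.X ^ e +
      ∑ j ∈ Finset.range e, PowerSeries.C (a j) * PowerSeries.X ^ j)
    (haDvd : ∀ j < e, (p : WittVector p k) ∣ a j)
    (ha0 : ¬ ((p : WittVector p k) ^ 2 ∣ a 0))
    (i : ℕ) (hi : 1 ≤ i)
    (J : Ideal (PowerSeries (WittVector p k)))
    (s N : ℕ)
    (hus : (PowerSeries.X : PowerSeries (WittVector p k)) ^ s ∈ J)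
    (hpN : ((p : PowerSeries (WittVector p k)) ^ N) ∈ J)
    (hJ : ∀ x ∈ J, E ^ (i - 1) * x ∈ Ideal.map φ J)
    (α : ℕ)
    (hα : J ⊔ Ideal.span {(p : PowerSeries (WittVector p k))} =
      Ideal.span {(PowerSeries.X : PowerSeries (WittVector p k)) ^ α} ⊔
        Ideal.span {(p : PowerSeries (WittVector p k))}) :
    (p - 1) * α ≤ e * (i - 1) := by
  by_contra hcon
  push_neg at hcon
  have hp : p.Prime := Fact.out
  set u : PowerSeries (WittVector p k) := PowerSeries.X with hu
  set I : Ideal (PowerSeries (WittVector p k)) :=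
    Ideal.span {(p : PowerSeries (WittVector p k))} with hI
  set K : Ideal (PowerSeries (WittVector p k)) := Ideal.span {u ^ (p * α)} ⊔ I with hK
  have hIK : I ≤ K := le_sup_right
  -- map φ J ≤ K
  have hmap : Ideal.map φ J ≤ K := by
    rw [Ideal.map_le_iff_le_comap]
    intro x hx
    have hx' : x ∈ Ideal.span {u ^ α} ⊔ I := by
      have hxx : x ∈ J ⊔ I := Ideal.mem_sup_left hx
      rwa [hα] at hxx
    obtain ⟨y, hy, z, hz, rfl⟩ := Submodule.mem_sup.mp hx'
    obtain ⟨c, rfl⟩ := Ideal.mem_span_singleton.mp hy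
    obtain ⟨d, rfl⟩ := Ideal.mem_span_singleton.mp hz
    simp only [Ideal.mem_comap, map_add, map_mul, map_pow, hφu, map_natCast]
    refine Submodule.add_mem _ (Ideal.mem_sup_left ?_) (Ideal.mem_sup_right ?_)
    · rw [Ideal.mem_span_singleton, ← pow_mul]
      exact dvd_mul_right _ _
    · exact Ideal.mem_span_singleton.mpr (dvd_mul_right _ _)
  -- E ≡ u^e mod I
  have hEI : E - u ^ e ∈ I := by
    rw [hE]
    rw [show PowerSeries.X ^ e +
        (∑ j ∈ Finset.range e, PowerSeries.C (a j) * PowerSeries.X ^ j) - u ^ e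
        = ∑ j ∈ Finset.range e, PowerSeries.C (a j) * PowerSeries.X ^ j by
      rw [hu]; ring]
    refine Ideal.sum_mem _ fun j hj => ?_
    obtain ⟨b, hb⟩ := haDvd j (Finset.mem_range.mp hj)
    rw [hb, map_mul, map_natCast]
    exact Ideal.mul_mem_right _ _ (Ideal.mul_mem_right _ _ (Ideal.subset_span rfl))
  have hEpow : E ^ (i - 1) - u ^ (e * (i - 1)) ∈ I := by
    have h1 : Ideal.Quotient.mk I E = Ideal.Quotient.mk I (u ^ e) := Ideal.Quotient.eq.mpr hEI
    have h2 : Ideal.Quotient.mk I (E ^ (i - 1)) = Ideal.Quotient.mk I (u ^ (e * (i - 1))) := by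
      rw [map_pow, h1, ← map_pow, ← pow_mul]
    exact Ideal.Quotient.eq.mp h2
  -- u^α ∈ J ⊔ I
  have humem : u ^ α ∈ J ⊔ I := by
    rw [hα]; exact Ideal.mem_sup_left (Ideal.subset_span rfl)
  obtain ⟨y, hy, z, hz, hyz⟩ := Submodule.mem_sup.mp humem
  have hmem : u ^ (e * (i - 1) + α) ∈ K := by
    have h4 : E ^ (i - 1) * u ^ α ∈ K := by
      rw [← hyz, mul_add]
      exact Submodule.add_mem _ (hmap (hJ y hy)) (hIK (Ideal.mul_mem_left _ _ hz))
    have hid : u ^ (e * (i - 1) + α)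
        = E ^ (i - 1) * u ^ α - (E ^ (i - 1) - u ^ (e * (i - 1))) * u ^ α := by
      rw [pow_add]; ring
    rw [hid]
    exact Submodule.sub_mem _ h4 (hIK (Ideal.mul_mem_right _ _ hEpow))
  -- numeric
  have h5 : (p - 1) * α + α = p * α := by
    rw [Nat.sub_one_mul, Nat.sub_add_cancel (Nat.le_mul_of_pos_left α hp.pos)]
  have hlt : e * (i - 1) + α < p * α := by omega
  -- derive contradiction
  obtain ⟨y2, hy2, z2, hz2, hsum⟩ := Submodule.mem_sup.mp hmem
  have hy2c : (PowerSeries.coeff (e * (i - 1) + α)) y2 = 0 :=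
    PowerSeries.X_pow_dvd_iff.mp (Ideal.mem_span_singleton.mp hy2) _ hlt
  obtain ⟨d, rfl⟩ := Ideal.mem_span_singleton.mp hz2
  have := congrArg (PowerSeries.coeff (e * (i - 1) + α)) hsum
  rw [map_add, hy2c, zero_add, show ((p : PowerSeries (WittVector p k)) * d) = PowerSeries.C (p : WittVector p k) * d by rw [map_natCast], PowerSeries.coeff_C_mul, hu, PowerSeries.coeff_X_pow, if_pos rfl] at this
  exact (WittVector.irreducible p (k := k)).not_isUnit
    (IsUnit.of_mul_eq_one _ this)
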